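/- For every field F and every simple graph G on n vertices, the product of the minrank of G over F and the minrank of the complement graph of G over F is at least n. -/

import Mathlib

/-- A matrix `M` over a field `F` represents a simple graph `G` if all diagonal entries are
nonzero and entries at distinct non-adjacent pairs of vertices are zero. -/
def Represents {V F : Type*} [Field F] (G : SimpleGraph V) (M : Matrix V V F) : Prop :=
  (∀ v, M v v ≠ 0) ∧ ∀ u v : V, u ≠ v → ¬G.Adj u v → M u v = 0

/-- The minrank of a simple graph `G` over a field `F`. -/
noncomputable def minrank (F : Type*) [Field F] {V : Type*} [Fintype V] [DecidableEq V]
    (G : SimpleGraph V) : ℕ :=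
  sInf {r : ℕ | ∃ M : Matrix V V F, Represents G M ∧ M.rank = r}

open Matrix in
/-- Rank factorization of a matrix over a field. -/
lemma exists_rank_factorization {F V : Type*} [Field F] [Fintype V] [DecidableEq V]
    (M : Matrix V V F) :
    ∃ (A : Matrix V (Fin M.rank) F) (B : Matrix (Fin M.rank) V F), M = A * B := by
  set W := LinearMap.range M.mulVecLin with hW
  have hfin : Module.finrank F W = M.rank := rfl
  let b : Module.Basis (Fin M.rank) F W := Module.finBasisOfFinrankEq F W hfin
  have hcol : ∀ v : V, M.mulVec (Pi.single v 1) ∈ W := fun v =>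
    LinearMap.mem_range.mpr ⟨Pi.single v 1, rfl⟩
  let c : V → W := fun v => ⟨M.mulVec (Pi.single v 1), hcol v⟩
  refine ⟨fun u i => (b i : V → F) u, fun i v => b.repr (c v) i, ?_⟩
  ext u v
  have h : (∑ i, b.repr (c v) i • b i) = c v := b.sum_repr (c v)
  have hcv : ((c v : W) : V → F) u = M u v := by
    simp [c, Matrix.mulVec, dotProduct, Pi.single_apply]
  show M u v = ∑ i, (b i : V → F) u * b.repr (c v) i
  calc M u v = ((c v : W) : V → F) u := hcv.symm
    _ = ((∑ i, b.repr (c v) i • b i : W) : V → F) u := by rw [h]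
    _ = ∑ i, (b i : V → F) u * b.repr (c v) i := by
        simp only [AddSubmonoidClass.coe_finset_sum, SetLike.val_smul, Finset.sum_apply,
          Pi.smul_apply, smul_eq_mul]
        exact Finset.sum_congr rfl fun i _ => mul_comm _ _

lemma card_le_rank_mul_rank {F V : Type*} [Field F] [Fintype V] [DecidableEq V]
    (G : SimpleGraph V) (M N : Matrix V V F) (hM : Represents G M) (hN : Represents Gᶜ N) :
    Fintype.card V ≤ M.rank * N.rank := by
  classical
  obtain ⟨A, B, hAB⟩ := exists_rank_factorization M
  obtain ⟨C, D, hCD⟩ := exists_rank_factorization N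
  set P : Matrix V (Fin M.rank × Fin N.rank) F := fun u p => A u p.1 * C u p.2 with hP
  set Q : Matrix (Fin M.rank × Fin N.rank) V F := fun p v => B p.1 v * D p.2 v with hQ
  have hPQ : P * Q = Matrix.diagonal (fun v => M v v * N v v) := by
    ext u v
    have : (P * Q) u v = M u v * N u v := by
      rw [Matrix.mul_apply]
      have : ∑ p : Fin M.rank × Fin N.rank, P u p * Q p v
          = (∑ i, A u i * B i v) * (∑ j, C u j * D j v) := by
        rw [Finset.sum_mul_sum, ← Finset.sum_product']
        refine Finset.sum_congr rfl fun p _ => by ring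
      rw [this]
      conv_rhs => rw [hAB, hCD]
      rw [Matrix.mul_apply, Matrix.mul_apply]
    rw [this]
    rcases eq_or_ne u v with rfl | huv
    · simp
    · rw [Matrix.diagonal_apply_ne _ huv]
      rcases Classical.em (G.Adj u v) with h | h
      · have : N u v = 0 := hN.2 u v huv (by simp [SimpleGraph.compl_adj, h])
        simp [this]
      · have : M u v = 0 := hM.2 u v huv h
        simp [this]
  have hrank : (P * Q).rank = Fintype.card V := by
    rw [hPQ, Matrix.rank_diagonal]
    refine Fintype.card_of_subtype Finset.univ fun v => ?_
    simp [mul_ne_zero (hM.1 v) (hN.1 v)]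
  calc Fintype.card V = (P * Q).rank := hrank.symm
    _ ≤ P.rank := Matrix.rank_mul_le_left P Q
    _ ≤ Fintype.card (Fin M.rank × Fin N.rank) := Matrix.rank_le_card_width P
    _ = M.rank * N.rank := by simp

theorem minrank_mul_minrank_compl_ge (F : Type*) [Field F] {V : Type*} [Fintype V]
    [DecidableEq V] (G : SimpleGraph V) :
    Fintype.card V ≤ minrank F G * minrank F Gᶜ := by
  have hne : ∀ H : SimpleGraph V, {r : ℕ | ∃ M : Matrix V V F, Represents H M ∧ M.rank = r}.Nonempty := by
    intro H
    exact ⟨(1 : Matrix V V F).rank, 1, ⟨fun v => by simp,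
      fun u v huv _ => by simp [Matrix.one_apply_ne huv]⟩, rfl⟩
  obtain ⟨M, hM, hMr⟩ := Nat.sInf_mem (hne G)
  obtain ⟨N, hN, hNr⟩ := Nat.sInf_mem (hne Gᶜ)
  rw [minrank, minrank, ← hMr, ← hNr]
  exact card_le_rank_mul_rank G M N hM hN
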